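/- Under the quadratic-constraint assumptions (J ≠ 0, H Hessian with spectral radius ρ, ε^G the geometric minimizer, ε^S the Sampson minimizer, and the condition ‖J‖⁴ ≥ 2|C(z)||JHJᵀ|), the chain of inequalities (1/2)‖ε^G‖ ≤ ‖ε^S‖ ≤ ‖ε^G‖ + (ρ/(2‖J‖))‖ε^G‖² holds. -/

import Mathlib

open Matrix

/-- The Euclidean norm of a vector in `ℝⁿ`. -/
noncomputable def euclNorm {n : ℕ} (v : Fin n → ℝ) : ℝ :=
  Real.sqrt (∑ i, v i ^ 2)

/-- The spectral radius of a real square matrix. -/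
noncomputable def specRad {m : ℕ} (A : Matrix (Fin m) (Fin m) ℝ) : ℝ :=
  ⨆ μ ∈ spectrum ℝ A, |μ|

lemma euclNorm_nonneg {n : ℕ} (v : Fin n → ℝ) : 0 ≤ euclNorm v := Real.sqrt_nonneg _

lemma euclNorm_sq {n : ℕ} (v : Fin n → ℝ) : euclNorm v ^ 2 = ∑ i, v i ^ 2 :=
  Real.sq_sqrt (Finset.sum_nonneg fun i _ => sq_nonneg _)

lemma euclNorm_smul {n : ℕ} (c : ℝ) (v : Fin n → ℝ) :
    euclNorm (c • v) = |c| * euclNorm v := by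
  unfold euclNorm
  rw [← Real.sqrt_sq_eq_abs, ← Real.sqrt_mul (sq_nonneg c), Finset.mul_sum]
  congr 1
  exact Finset.sum_congr rfl fun i _ => by simp [mul_pow]

lemma euclNorm_pos {n : ℕ} {v : Fin n → ℝ} (hv : v ≠ 0) : 0 < euclNorm v := by
  obtain ⟨i, hi⟩ := Function.ne_iff.mp hv
  exact Real.sqrt_pos.mpr (Finset.sum_pos' (fun j _ => sq_nonneg _)
    ⟨i, Finset.mem_univ i, lt_of_le_of_ne (sq_nonneg _) (Ne.symm (pow_ne_zero 2 hi))⟩)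

lemma dot_self_eq {n : ℕ} (v : Fin n → ℝ) : v ⬝ᵥ v = euclNorm v ^ 2 := by
  rw [euclNorm_sq]
  exact Finset.sum_congr rfl fun i _ => (sq (v i)).symm

lemma abs_dot_le {n : ℕ} (v w : Fin n → ℝ) : |v ⬝ᵥ w| ≤ euclNorm v * euclNorm w := by
  have h := Finset.sum_mul_sq_le_sq_mul_sq Finset.univ v w
  rw [← Real.sqrt_sq_eq_abs]
  unfold euclNorm
  rw [← Real.sqrt_mul (Finset.sum_nonneg fun i _ => sq_nonneg _)]
  exact Real.sqrt_le_sqrt h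

lemma abs_eig_le {m : ℕ} (A : Matrix (Fin m) (Fin m) ℝ) {μ : ℝ}
    (hμ : μ ∈ spectrum ℝ A) : |μ| ≤ specRad A := by
  have hfin : (spectrum ℝ A).Finite := A.finite_spectrum
  have hbdd : BddAbove (Set.range fun ν : ℝ => ⨆ _ : ν ∈ spectrum ℝ A, |ν|) := by
    apply Set.Finite.bddAbove
    apply Set.Finite.subset ((hfin.image abs).insert 0)
    rintro y ⟨ν, rfl⟩
    by_cases h : ν ∈ spectrum ℝ A
    · refine Set.mem_insert_iff.mpr (Or.inr ⟨ν, h, ?_⟩)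
      simp only [ciSup_pos h]
    · have : IsEmpty (ν ∈ spectrum ℝ A) := ⟨h⟩
      simp [Real.iSup_of_isEmpty]
  have := le_ciSup hbdd μ
  rwa [ciSup_pos hμ] at this

lemma quad_bound {m : ℕ} (A : Matrix (Fin m) (Fin m) ℝ) (hA : A.IsHermitian)
    (x : Fin m → ℝ) :
    |x ⬝ᵥ A.mulVec x| ≤ specRad A * euclNorm x ^ 2 := by
  classical
  rw [euclNorm_sq]
  set U : Matrix (Fin m) (Fin m) ℝ := (hA.eigenvectorUnitary : Matrix (Fin m) (Fin m) ℝ) with hU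
  have hUU : U * star U = 1 := (Matrix.mem_unitaryGroup_iff).mp (hA.eigenvectorUnitary).2
  set y : Fin m → ℝ := (star U).mulVec x with hy
  have hvm : x ᵥ* U = y := by
    rw [hy, Matrix.star_eq_conjTranspose, conjTranspose_eq_transpose_of_trivial,
      mulVec_transpose]
  have key1 : x ⬝ᵥ A.mulVec x = ∑ i, hA.eigenvalues i * y i ^ 2 := by
    conv_lhs => rw [hA.spectral_theorem]
    rw [Unitary.conjStarAlgAut_apply, ← Matrix.mulVec_mulVec, ← Matrix.mulVec_mulVec, dotProduct_mulVec, hvm]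
    simp only [mulVec_diagonal, dotProduct, Function.comp_apply, RCLike.ofReal_real_eq_id, id]
    exact Finset.sum_congr rfl fun i _ => by ring
  have key2 : ∑ i, y i ^ 2 = ∑ i, x i ^ 2 := by
    have h1 : y ⬝ᵥ y = x ⬝ᵥ x := by
      nth_rewrite 1 [← hvm]
      rw [hy, ← Matrix.dotProduct_mulVec, Matrix.mulVec_mulVec, hUU, Matrix.one_mulVec]
    simpa [dotProduct, sq] using h1
  rw [key1]
  calc |∑ i, hA.eigenvalues i * y i ^ 2| ≤ ∑ i, |hA.eigenvalues i * y i ^ 2| :=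
        Finset.abs_sum_le_sum_abs _ _
    _ ≤ ∑ i, specRad A * y i ^ 2 := by
        apply Finset.sum_le_sum
        intro i _
        rw [abs_mul, abs_of_nonneg (sq_nonneg (y i))]
        exact mul_le_mul_of_nonneg_right
          (abs_eig_le A (hA.eigenvalues_mem_spectrum_real i)) (sq_nonneg _)
    _ = specRad A * ∑ i, x i ^ 2 := by rw [← Finset.mul_sum, key2]


/-- Under the quadratic-constraint assumptions (`J ≠ 0`, Hessian `H` with spectral
radius `ρ`, geometric minimizer `ε^G`, Sampson minimizer `ε^S = −(C z/‖J‖²) • J`,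
and the condition `‖J‖⁴ ≥ 2 |C z| |J H Jᵀ|`), the chain of inequalities
`(1/2) ‖ε^G‖ ≤ ‖ε^S‖ ≤ ‖ε^G‖ + (ρ/(2‖J‖)) ‖ε^G‖²` holds. -/
theorem stmt15 {n : ℕ} (C : (Fin n → ℝ) → ℝ) (z J : Fin n → ℝ)
    (H : Matrix (Fin n) (Fin n) ℝ) (hH : H.IsSymm)
    (ρ : ℝ) (hρ : ρ = specRad H)
    (hTaylor : ∀ ε, C (z + ε) = C z + J ⬝ᵥ ε + (1 / 2) * (ε ⬝ᵥ H.mulVec ε))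
    (hJ0 : J ≠ 0)
    (hcond : euclNorm J ^ 4 ≥ 2 * |C z| * |J ⬝ᵥ H.mulVec J|)
    (εG : Fin n → ℝ) (hG : C (z + εG) = 0)
    (hGmin : ∀ ε, C (z + ε) = 0 → euclNorm εG ≤ euclNorm ε)
    (εS : Fin n → ℝ) (hS : εS = (-(C z / euclNorm J ^ 2)) • J) :
    (1 / 2) * euclNorm εG ≤ euclNorm εS ∧
    euclNorm εS ≤ euclNorm εG + ρ / (2 * euclNorm J) * euclNorm εG ^ 2 := by
  have hA : H.IsHermitian := by
    rw [Matrix.IsHermitian, conjTranspose_eq_transpose_of_trivial]; exact hH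
  set L := euclNorm J with hLdef
  have hL : 0 < L := euclNorm_pos hJ0
  have hJJ : J ⬝ᵥ J = L ^ 2 := dot_self_eq J
  set c := C z with hcdef
  have hεS : euclNorm εS = |c| / L := by
    rw [hS, euclNorm_smul, abs_neg, abs_div, abs_of_nonneg (by positivity : (0:ℝ) ≤ L^2)]
    field_simp
    ring
  -- upper bound
  have hq : |εG ⬝ᵥ H.mulVec εG| ≤ ρ * euclNorm εG ^ 2 := by
    rw [hρ]; exact quad_bound H hA εG
  have hdot : |J ⬝ᵥ εG| ≤ L * euclNorm εG := abs_dot_le J εG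
  have hc : c = -(J ⬝ᵥ εG) - (1/2) * (εG ⬝ᵥ H.mulVec εG) := by
    have := hTaylor εG
    rw [hG] at this
    linarith
  have hCabs : |c| ≤ L * euclNorm εG + ρ/2 * euclNorm εG ^ 2 := by
    have h1 : |c| ≤ |J ⬝ᵥ εG| + |(1/2) * (εG ⬝ᵥ H.mulVec εG)| := by
      rw [hc, sub_eq_add_neg, ← neg_add, abs_neg]
      exact abs_add_le _ _
    have h2 : |(1/2) * (εG ⬝ᵥ H.mulVec εG)| = (1/2) * |εG ⬝ᵥ H.mulVec εG| := by
      rw [abs_mul]; norm_num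
    rw [h2] at h1
    linarith
  have hupper : euclNorm εS ≤ euclNorm εG + ρ / (2 * L) * euclNorm εG ^ 2 := by
    rw [hεS, div_le_iff₀ hL]
    have heq : (euclNorm εG + ρ / (2*L) * euclNorm εG ^ 2) * L
        = L * euclNorm εG + ρ/2 * euclNorm εG ^ 2 := by
      field_simp
    rw [heq]
    exact hCabs
  -- lower bound
  set a := J ⬝ᵥ H.mulVec J with ha
  have hD : 0 ≤ L^4 - 2*a*c := by
    have h1 : 2*a*c ≤ 2 * |c| * |a| := by
      calc 2*a*c ≤ |2*a*c| := le_abs_self _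
        _ = 2 * |c| * |a| := by rw [abs_mul, abs_mul, abs_two]; ring
    have h2 : 2 * |c| * |a| ≤ L^4 := hcond
    linarith
  set s := Real.sqrt (L^4 - 2*a*c) with hsdef
  have hs0 : 0 ≤ s := Real.sqrt_nonneg _
  have hs2 : s^2 = L^4 - 2*a*c := Real.sq_sqrt hD
  have hden : 0 < L^2 + s := by positivity
  set t := -2*c/(L^2+s) with htdef
  have hfeas : C (z + t • J) = 0 := by
    rw [hTaylor]
    have e1 : J ⬝ᵥ (t • J) = t * L^2 := by
      rw [dotProduct_smul, hJJ]; simp [smul_eq_mul]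
    have e2 : (t • J) ⬝ᵥ H.mulVec (t • J) = t^2 * a := by
      rw [Matrix.mulVec_smul, dotProduct_smul, smul_dotProduct, ha]
      simp [smul_eq_mul]; ring
    rw [e1, e2, htdef]
    field_simp
    linear_combination c * hs2
  have hmin := hGmin _ hfeas
  have hnormtJ : euclNorm (t • J) = |t| * L := euclNorm_smul t J
  have habs_t : |t| = 2 * |c|/(L^2+s) := by
    rw [htdef, abs_div, abs_of_pos hden, abs_mul]
    norm_num
  have hle : |t| * L ≤ 2 * (|c| / L) := by
    rw [habs_t]
    have h1 : 2 * |c|/(L^2+s) ≤ 2 * |c|/L^2 := by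
      gcongr
      linarith
    calc 2 * |c|/(L^2+s) * L ≤ 2 * |c|/L^2 * L := by gcongr
      _ = 2 * (|c| / L) := by field_simp
  have hlow : euclNorm εG ≤ 2 * euclNorm εS := by
    rw [hεS]
    calc euclNorm εG ≤ euclNorm (t • J) := hmin
      _ = |t| * L := hnormtJ
      _ ≤ 2 * (|c| / L) := hle
  exact ⟨by linarith, hupper⟩
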